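/- If M is a nonzero z-invariant closed subspace of H²_ω, d ≥ 0 is an integer with z^k ∈ M^⊥ for 0 ≤ k ≤ d−1 and z^d ∉ M^⊥, and u = P_M(z^d) denotes the orthogonal projection of z^d onto M, then u/‖u‖ is an H²_ω-inner function. -/

import Mathlib

noncomputable section
open Complex Filter

namespace WHS

/-- Membership in the weighted Hardy space: the coefficient sequence `a` satisfies
`∑ ω n * |a n|^2 < ∞`. -/
def memH (ω : ℕ → ℝ) (a : ℕ → ℂ) : Prop :=
  Summable fun n => ω n * ‖a n‖ ^ 2

/-- The squared norm `‖f‖²` in the weighted Hardy space. -/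
def wNorm2 (ω : ℕ → ℝ) (a : ℕ → ℂ) : ℝ := ∑' n, ω n * ‖a n‖ ^ 2

/-- The inner product `⟨f, g⟩ = ∑ ω n * a n * conj (b n)` (linear in the first argument). -/
def wInner (ω : ℕ → ℝ) (a b : ℕ → ℂ) : ℂ :=
  ∑' n, (ω n : ℂ) * a n * (starRingEnd ℂ) (b n)

/-- Coefficients of `z^m * f`. -/
def shift (m : ℕ) (a : ℕ → ℂ) : ℕ → ℂ := fun n => if m ≤ n then a (n - m) else 0

/-- Coefficients of `p * f` for a polynomial `p`. -/
def polyMul (p : Polynomial ℂ) (a : ℕ → ℂ) : ℕ → ℂ :=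
  fun n => ∑ j ∈ Finset.range (n + 1), p.coeff j * a (n - j)

/-- Coefficients of the product of power series with coefficients `b` and `a`. -/
def conv (b a : ℕ → ℂ) : ℕ → ℂ :=
  fun n => ∑ j ∈ Finset.range (n + 1), b j * a (n - j)

/-- `f` is an `H²_ω`-inner function: `f ∈ H²_ω`, `‖f‖ = 1` and `⟨z^m f, f⟩ = 0` for all `m ≥ 1`. -/
def IsInner (ω : ℕ → ℝ) (a : ℕ → ℂ) : Prop :=
  memH ω a ∧ wNorm2 ω a = 1 ∧ ∀ m : ℕ, 1 ≤ m → wInner ω (shift m a) a = 0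

end WHS



open scoped ENNReal InnerProductSpace ComplexConjugate in
private lemma iter_apply_aux (ω : ℕ → ℝ) (hpos : ∀ n, 0 < ω n)
    (Mz : lp (fun _ : ℕ => ℂ) 2 →L[ℂ] lp (fun _ : ℕ => ℂ) 2)
    (hMz0 : ∀ x : lp (fun _ : ℕ => ℂ) 2, (Mz x) 0 = 0)
    (hMzS : ∀ (x : lp (fun _ : ℕ => ℂ) 2) (n : ℕ),
      (Mz x) (n + 1) = ((Real.sqrt (ω (n + 1)) / Real.sqrt (ω n) : ℝ) : ℂ) * x n) :
    ∀ (m : ℕ) (x : lp (fun _ : ℕ => ℂ) 2) (n : ℕ),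
      ((fun y => Mz y)^[m] x) n =
        if m ≤ n then ((Real.sqrt (ω n) / Real.sqrt (ω (n - m)) : ℝ) : ℂ) * x (n - m) else 0 := by
  have hs : ∀ n, Real.sqrt (ω n) ≠ 0 := fun n => (Real.sqrt_pos.mpr (hpos n)).ne'
  intro m
  induction m with
  | zero =>
    intro x n
    simp [div_self (hs n)]
  | succ m ih =>
    intro x n
    rw [Function.iterate_succ_apply']
    cases n with
    | zero =>
      simp [hMz0]
    | succ k =>
      rw [hMzS, ih]
      by_cases h : m ≤ k
      · rw [if_pos h, if_pos (Nat.succ_le_succ h)]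
        have hk : (k + 1) - (m + 1) = k - m := by omega
        rw [hk, ← mul_assoc, ← Complex.ofReal_mul, div_mul_div_cancel₀ (hs k)]
      · rw [if_neg h, if_neg (by omega), mul_zero]

open scoped ENNReal InnerProductSpace ComplexConjugate in
/-- if `M` is a nonzero `z`-invariant closed subspace of `H²_ω`
(modelled on `ℓ²`), `z^k ∈ M^⊥` for `k < d`, `z^d ∉ M^⊥`, and `u` is the orthogonal
projection of `z^d` onto `M` (i.e. `u ∈ M` and `z^d − u ∈ M^⊥`), then `u/‖u‖` is
`H²_ω`-inner. -/
theorem stmt12 (ω : ℕ → ℝ) (hpos : ∀ n, 0 < ω n) (hω0 : ω 0 = 1)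
    (hlim : Filter.Tendsto (fun n => ω (n + 1) / ω n) Filter.atTop (nhds 1))
    (Mz : lp (fun _ : ℕ => ℂ) 2 →L[ℂ] lp (fun _ : ℕ => ℂ) 2)
    (hMz0 : ∀ x : lp (fun _ : ℕ => ℂ) 2, (Mz x) 0 = 0)
    (hMzS : ∀ (x : lp (fun _ : ℕ => ℂ) 2) (n : ℕ),
      (Mz x) (n + 1) = ((Real.sqrt (ω (n + 1)) / Real.sqrt (ω n) : ℝ) : ℂ) * x n)
    (M : Submodule ℂ (lp (fun _ : ℕ => ℂ) 2)) (hMcl : IsClosed (M : Set (lp (fun _ : ℕ => ℂ) 2)))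
    (hMne : M ≠ ⊥) (hinv : ∀ x ∈ M, Mz x ∈ M)
    (d : ℕ)
    (hperp : ∀ k < d, lp.single 2 k ((Real.sqrt (ω k) : ℂ)) ∈ Mᗮ)
    (hd : lp.single 2 d ((Real.sqrt (ω d) : ℂ)) ∉ Mᗮ)
    (u : lp (fun _ : ℕ => ℂ) 2) (huM : u ∈ M)
    (hproj : lp.single 2 d ((Real.sqrt (ω d) : ℂ)) - u ∈ Mᗮ) :
    WHS.IsInner ω (fun n => ((‖u‖ : ℝ) : ℂ)⁻¹ * (u n / (Real.sqrt (ω n) : ℂ))) := by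
    classical
  have hsne : ∀ n, Real.sqrt (ω n) ≠ 0 := fun n => (Real.sqrt_pos.mpr (hpos n)).ne'
  have hsCne : ∀ n, ((Real.sqrt (ω n) : ℝ) : ℂ) ≠ 0 := fun n => Complex.ofReal_ne_zero.mpr (hsne n)
  set s : lp (fun _ : ℕ => ℂ) 2 := lp.single 2 d ((Real.sqrt (ω d) : ℂ)) with hs_def
  have hune : u ≠ 0 := by
    intro h
    apply hd
    simpa [h] using hproj
  have hnorm : ‖u‖ ≠ 0 := norm_ne_zero_iff.mpr hune
  have hu0 : ∀ k < d, u k = 0 := by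
    intro k hk
    have h1 := (Submodule.mem_orthogonal M _).1 (hperp k hk) u huM
    rw [lp.inner_eq_tsum] at h1
    rw [tsum_eq_single k (fun n hn => by
      rw [RCLike.inner_apply, lp.single_apply_ne 2 k _ hn, zero_mul])] at h1
    rw [RCLike.inner_apply, lp.single_apply_self] at h1
    have h2 := (mul_eq_zero.mp h1).resolve_left (hsCne k)
    simpa using h2
  have hiter := iter_apply_aux ω hpos Mz hMz0 hMzS
  have hvM : ∀ m : ℕ, (fun y => Mz y)^[m] u ∈ M := by
    intro m
    induction m with
    | zero => simpa using huM
    | succ m ih => rw [Function.iterate_succ_apply']; exact hinv _ ih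
  have hkey : ∀ m : ℕ, 1 ≤ m → ⟪u, (fun y => Mz y)^[m] u⟫_ℂ = 0 := by
    intro m hm
    set v := (fun y => Mz y)^[m] u with hv
    have hvd : (v : ∀ _ : ℕ, ℂ) d = 0 := by
      rw [hv, hiter]
      by_cases h : m ≤ d
      · rw [if_pos h, hu0 (d - m) (by omega), mul_zero]
      · rw [if_neg h]
    have hsv : ⟪s, v⟫_ℂ = 0 := by
      rw [lp.inner_eq_tsum]
      rw [tsum_eq_single d (fun n hn => by
        rw [RCLike.inner_apply, hs_def, lp.single_apply_ne 2 d _ hn, map_zero, mul_zero])]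
      rw [RCLike.inner_apply, hvd, zero_mul]
    have hsuv : ⟪s - u, v⟫_ℂ = 0 :=
      (Submodule.mem_orthogonal' M _).1 hproj v (hvM m)
    have h3 : ⟪s - (s - u), v⟫_ℂ = 0 := by
      rw [inner_sub_left, hsv, hsuv, sub_zero]
    simpa [sub_sub_cancel] using h3
  have hnormterm : ∀ n : ℕ,
      ω n * ‖((‖u‖ : ℝ) : ℂ)⁻¹ * (u n / (Real.sqrt (ω n) : ℂ))‖ ^ 2
        = ‖u‖⁻¹ ^ 2 * ‖u n‖ ^ 2 := by
    intro n
    have h1 : Real.sqrt (ω n) ^ 2 = ω n := Real.sq_sqrt (hpos n).le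
    rw [norm_mul, norm_div, norm_inv, Complex.norm_real, Complex.norm_real,
      Real.norm_eq_abs, Real.norm_eq_abs, _root_.abs_of_nonneg (norm_nonneg u),
      _root_.abs_of_nonneg (Real.sqrt_nonneg _), mul_pow, div_pow, h1]
    field_simp [(hpos n).ne']
  have husum : Summable fun n => ‖u n‖ ^ 2 := by
    have := (lp.memℓp u).summable (p := 2) (by norm_num)
    simpa [Real.rpow_natCast] using this
  have hnorm2 : ‖u‖ ^ 2 = ∑' n, ‖u n‖ ^ 2 := by
    have := lp.norm_rpow_eq_tsum (p := 2) (by norm_num) u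
    simpa [Real.rpow_natCast] using this
  refine ⟨?_, ?_, ?_⟩
  · exact (husum.mul_left (‖u‖⁻¹ ^ 2)).congr fun n => (hnormterm n).symm
  · unfold WHS.wNorm2
    calc (∑' n, ω n * ‖((‖u‖ : ℝ) : ℂ)⁻¹ * (u n / (Real.sqrt (ω n) : ℂ))‖ ^ 2)
        = ∑' n, ‖u‖⁻¹ ^ 2 * ‖u n‖ ^ 2 := tsum_congr hnormterm
      _ = ‖u‖⁻¹ ^ 2 * ∑' n, ‖u n‖ ^ 2 := tsum_mul_left
      _ = ‖u‖⁻¹ ^ 2 * ‖u‖ ^ 2 := by rw [← hnorm2]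
      _ = 1 := by field_simp
  · intro m hm
    unfold WHS.wInner WHS.shift
    set c : ℂ := ((‖u‖ : ℝ) : ℂ)⁻¹ with hc
    set v := (fun y => Mz y)^[m] u with hv
    have hterm : ∀ n : ℕ,
        ((ω n : ℝ) : ℂ) * (if m ≤ n then c * (u (n - m) / (Real.sqrt (ω (n - m)) : ℂ)) else 0)
            * (starRingEnd ℂ) (c * (u n / (Real.sqrt (ω n) : ℂ)))
          = (c * (starRingEnd ℂ) c) * ((starRingEnd ℂ) ((u : ∀ _ : ℕ, ℂ) n) * (v : ∀ _ : ℕ, ℂ) n) := by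
      intro n
      rw [hv, hiter]
      by_cases h : m ≤ n
      · rw [if_pos h, if_pos h]
        have hωn : ((ω n : ℝ) : ℂ) = ((Real.sqrt (ω n) : ℝ) : ℂ) * ((Real.sqrt (ω n) : ℝ) : ℂ) := by
          rw [← Complex.ofReal_mul, Real.mul_self_sqrt (hpos n).le]
        rw [map_mul, map_div₀, Complex.conj_ofReal, hωn]
        push_cast
        field_simp [hsCne n, hsCne (n - m), Complex.ofReal_ne_zero.mpr hnorm]
      · rw [if_neg h, if_neg h, mul_zero, zero_mul, mul_zero, mul_zero]
    calc (∑' n, ((ω n : ℝ) : ℂ)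
            * (if m ≤ n then c * (u (n - m) / (Real.sqrt (ω (n - m)) : ℂ)) else 0)
            * (starRingEnd ℂ) (c * (u n / (Real.sqrt (ω n) : ℂ))))
        = ∑' n, (c * (starRingEnd ℂ) c)
            * ((starRingEnd ℂ) ((u : ∀ _ : ℕ, ℂ) n) * (v : ∀ _ : ℕ, ℂ) n) := tsum_congr hterm
      _ = (c * (starRingEnd ℂ) c) * ∑' n, (starRingEnd ℂ) ((u : ∀ _ : ℕ, ℂ) n) * (v : ∀ _ : ℕ, ℂ) n :=
          tsum_mul_left
      _ = (c * (starRingEnd ℂ) c) * ⟪u, v⟫_ℂ := by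
          rw [lp.inner_eq_tsum]; congr 1; exact tsum_congr fun n => by rw [RCLike.inner_apply, mul_comm]
      _ = 0 := by rw [hkey m hm, mul_zero]
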